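/- Let T be a finite tree-with-loop with transition matrix P of the simple random walk on T. Then every eigenvalue λ of P with λ ≠ 1 satisfies |λ| ≤ 1 − 1/((2·diam(T) + 1)·|E|); equivalently, the relaxation time t_rel = (1 − max{|λ| : λ an eigenvalue of P, λ ≠ 1})^{−1} satisfies t_rel ≤ (2·diam(T) + 1)·|E|. -/

import Mathlib

/-- A finite tree with a self-loop attached at a distinguished root:
a finite tree `g` on at least two vertices together with a root. -/
structure TreeWithLoop (S : Type*) [Fintype S] [DecidableEq S] where
  g : SimpleGraph S
  isTree : g.IsTree
  root : S
  card_ge : 2 ≤ Fintype.card S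

namespace TreeWithLoop

variable {S : Type*} [Fintype S] [DecidableEq S]

/-- The degree of a vertex: number of tree edges, plus `1` at the root (the loop counts once). -/
noncomputable def deg (T : TreeWithLoop S) (x : S) : ℕ :=
  letI : DecidableRel T.g.Adj := Classical.decRel _
  T.g.degree x + (if x = T.root then 1 else 0)

/-- The transition matrix of the simple random walk on the tree with a loop at the root:
`P x y = 1/deg x` for tree edges, `P root root = 1/deg root`, and `0` otherwise. -/
noncomputable def transMatrix (T : TreeWithLoop S) : Matrix S S ℝ :=
  Matrix.of fun x y =>
    letI : DecidableRel T.g.Adj := Classical.decRel _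
    if T.g.Adj x y then ((T.deg x : ℝ))⁻¹
    else if x = y ∧ x = T.root then ((T.deg T.root : ℝ))⁻¹
    else 0

/-- The diameter of the tree: the maximal graph distance between two vertices. -/
noncomputable def diam (T : TreeWithLoop S) : ℕ :=
  Finset.univ.sup fun p : S × S => T.g.dist p.1 p.2

end TreeWithLoop

open Finset SimpleGraph

namespace TWLProof
open Finset SimpleGraph

variable {S : Type*} [Fintype S] [DecidableEq S] {g : SimpleGraph S} [DecidableRel g.Adj]

noncomputable def fm (v : S → ℝ) : Sym2 S → ℝ :=
  Sym2.lift ⟨fun a b => (v a - v b)^2, fun a b => by ring⟩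

noncomputable def fp (v : S → ℝ) : Sym2 S → ℝ :=
  Sym2.lift ⟨fun a b => (v a + v b)^2, fun a b => by ring⟩

omit [Fintype S] [DecidableEq S] in
lemma fm_mk (v : S → ℝ) (a b : S) : fm v s(a, b) = (v a - v b)^2 := rfl

omit [Fintype S] [DecidableEq S] in
lemma fp_mk (v : S → ℝ) (a b : S) : fp v s(a, b) = (v a + v b)^2 := rfl

omit [Fintype S] [DecidableEq S] in
lemma fm_nonneg (v : S → ℝ) (e : Sym2 S) : 0 ≤ fm v e := by
  induction e using Sym2.ind with
  | _ a b => rw [fm_mk]; positivity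

omit [Fintype S] [DecidableEq S] in
lemma fp_nonneg (v : S → ℝ) (e : Sym2 S) : 0 ≤ fp v e := by
  induction e using Sym2.ind with
  | _ a b => rw [fp_mk]; positivity

omit [Fintype S] [DecidableEq S] in
lemma list_sum_nonneg {f : Sym2 S → ℝ} (hf : ∀ e, 0 ≤ f e) (l : List (Sym2 S)) :
    0 ≤ (l.map f).sum := by
  apply List.sum_nonneg
  intro x hx
  obtain ⟨e, -, rfl⟩ := List.mem_map.1 hx
  exact hf e

omit [Fintype S] [DecidableEq S] in
lemma walk_bound_sub (v : S → ℝ) {x y : S} (p : g.Walk x y) :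
    (v x - v y)^2 ≤ (p.length : ℝ) * ((p.edges.map (fm v)).sum) := by
  induction p with
  | nil => simp
  | @cons a b c h q ih =>
    have hS : 0 ≤ ((q.edges.map (fm v)).sum) := list_sum_nonneg (fm_nonneg v) _
    have hl : (0:ℝ) ≤ (q.length : ℝ) := by positivity
    simp only [SimpleGraph.Walk.length_cons, SimpleGraph.Walk.edges_cons, List.map_cons,
      List.sum_cons, fm_mk]
    push_cast
    rcases Nat.eq_zero_or_pos q.length with h0 | h0
    · have hb : v b = v c := by
        rw [h0] at ih
        have h2 : (v b - v c)^2 ≤ 0 := by simpa using ih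
        nlinarith [sq_nonneg (v b - v c)]
      rw [h0]
      push_cast
      rw [← hb]
      nlinarith [sq_nonneg (v a - v b)]
    · have h1 : (1:ℝ) ≤ (q.length : ℝ) := by exact_mod_cast h0
      nlinarith [sq_nonneg ((q.length : ℝ) * (v a - v b) - (v b - v c)), ih,
        mul_nonneg hl hS, mul_le_mul_of_nonneg_left ih (by linarith : (0:ℝ) ≤ (q.length : ℝ) + 1)]

omit [Fintype S] [DecidableEq S] in
lemma walk_bound_add (v : S → ℝ) {x y : S} (p : g.Walk x y) :
    (v x)^2 ≤ ((p.length : ℝ) + 1/2) * ((p.edges.map (fp v)).sum + 2 * (v y)^2) := by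
  induction p with
  | nil => norm_num; nlinarith [sq_nonneg (v x)]
  | @cons a b c h q ih =>
    have hS : 0 ≤ ((q.edges.map (fp v)).sum) := list_sum_nonneg (fp_nonneg v) _
    have hl : (0:ℝ) ≤ (q.length : ℝ) := by positivity
    simp only [SimpleGraph.Walk.length_cons, SimpleGraph.Walk.edges_cons, List.map_cons,
      List.sum_cons, fp_mk]
    push_cast
    nlinarith [sq_nonneg (((q.length : ℝ) + 1/2) * (v a + v b) + v b), hS,
      sq_nonneg (v c), sq_nonneg (v a + v b),
      mul_le_mul_of_nonneg_left ih (by linarith : (0:ℝ) ≤ (q.length : ℝ) + 3/2)]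

lemma path_sum_le {f : Sym2 S → ℝ} (hf : ∀ e, 0 ≤ f e) {x y : S} (p : g.Walk x y)
    (hp : p.IsPath) :
    (p.edges.map f).sum ≤ ∑ e ∈ g.edgeFinset, f e := by
  rw [← List.sum_toFinset f hp.isTrail.edges_nodup]
  apply Finset.sum_le_sum_of_subset_of_nonneg
  · intro e he
    rw [List.mem_toFinset] at he
    exact SimpleGraph.mem_edgeFinset.2 (p.edges_subset_edgeSet he)
  · intro e _ _
    exact hf e

lemma double_sum_adj (f : Sym2 S → ℝ) :
    ∑ x, ∑ y, (if g.Adj x y then f s(x, y) else 0) = 2 * ∑ e ∈ g.edgeFinset, f e := by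
  have h1 : ∑ x, ∑ y, (if g.Adj x y then f s(x, y) else 0)
      = ∑ p ∈ Finset.univ.filter (fun p : S × S => g.Adj p.1 p.2), f s(p.1, p.2) := by
    rw [Finset.sum_filter, ← Finset.sum_product']
    simp
  have h2 : ∑ p ∈ Finset.univ.filter (fun p : S × S => g.Adj p.1 p.2), f s(p.1, p.2)
      = ∑ d : g.Dart, f d.edge := by
    refine (Finset.sum_bij' (fun (d : g.Dart) _ => (d.fst, d.snd))
      (fun p hp => ⟨p, (Finset.mem_filter.1 hp).2⟩) ?_ ?_ ?_ ?_ ?_).symm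
    · intro d _; simp [d.adj]
    · intro p hp; simp
    · intro d _; rfl
    · intro p hp; rfl
    · intro d _; rfl
  have h3 : ∑ d : g.Dart, f d.edge = ∑ e ∈ g.edgeFinset, 2 * f e := by
    rw [← Finset.sum_fiberwise_of_maps_to (g := SimpleGraph.Dart.edge)
      (t := g.edgeFinset) (fun d _ => SimpleGraph.mem_edgeFinset.2 d.edge_mem)]
    refine Finset.sum_congr rfl fun e he => ?_
    have : ∀ d ∈ Finset.univ.filter (fun d : g.Dart => d.edge = e), f d.edge = f e := by
      intro d hd
      rw [(Finset.mem_filter.1 hd).2]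
    rw [Finset.sum_congr rfl this, Finset.sum_const,
      g.dart_edge_fiber_card e (SimpleGraph.mem_edgeFinset.1 he)]
    simp [mul_comm]
  rw [h1, h2, h3, Finset.mul_sum]

end TWLProof

lemma TWL_gap_arith1 {P t : ℝ} (hP : 0 < P) (h : 2 * P ≤ t * P) : 2 ≤ t := by nlinarith

lemma TWL_gap_arith2 {P t : ℝ} (hP : 0 < P) (h : P ≤ t * P) : 1 ≤ t := by nlinarith

lemma TWL_final_arith (lam n Dr Z : ℝ) (hn : 2 ≤ n) (hD : 1 ≤ Dr) (hZeq : Z = 2*n-1)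
    (h1 : 2 ≤ Z * Dr * (1 - lam)) (h2 : 1 ≤ Z * (Dr + 1/2) * (1 + lam)) :
    |lam| ≤ 1 - 1 / ((2*Dr+1)*n) := by
  subst hZeq
  have hden : 0 < (2*Dr+1)*n := by nlinarith
  have ht1 : (0:ℝ) < (2*n-1)*Dr := by nlinarith
  have ht2 : (0:ℝ) < (2*n-1)*(Dr+1/2) := by nlinarith
  have hs1 : 0 ≤ 1 - lam := by nlinarith [ht1]
  have hs2 : 0 ≤ 1 + lam := by nlinarith [ht2]
  have hb1 : 1 / ((2*Dr+1)*n) ≤ 1 - lam := by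
    rw [div_le_iff₀ hden]
    nlinarith [mul_nonneg hs1 (by nlinarith : (0:ℝ) ≤ 2*Dr*n + 2*n + Dr)]
  have hb2 : 1 / ((2*Dr+1)*n) ≤ 1 + lam := by
    rw [div_le_iff₀ hden]
    nlinarith [mul_nonneg hs2 (by nlinarith : (0:ℝ) ≤ 2*Dr + 1)]
  rw [abs_le]
  constructor <;> linarith


/-- **Relaxation time bound.** For the simple random walk on a finite tree-with-loop `T`,
every eigenvalue `λ ≠ 1` of the transition matrix satisfies
`|λ| ≤ 1 - 1/((2 diam T + 1) |E|)`, where `|E| = |S|` is the number of edges (loop included);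
equivalently, `t_rel ≤ (2 diam T + 1) |E|`. -/
theorem eigenvalue_abs_bound_of_treeWithLoop
    {S : Type*} [Fintype S] [DecidableEq S] (T : TreeWithLoop S)
    (lam : ℝ) (v : S → ℝ) (hv : v ≠ 0)
    (heig : T.transMatrix.mulVec v = lam • v) (hlam : lam ≠ 1) :
    |lam| ≤ 1 - 1 / ((2 * (T.diam : ℝ) + 1) * (Fintype.card S : ℝ)) := by
  classical
  letI : DecidableRel T.g.Adj := Classical.decRel _
  have hconn : T.g.Connected := T.isTree.isConnected
  have hdegdef : ∀ x, T.deg x = T.g.degree x + (if x = T.root then 1 else 0) := fun x => rfl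
  have hdegpos : ∀ x, 0 < T.g.degree x := by
    intro x
    rw [SimpleGraph.degree_pos_iff_exists_adj]
    obtain ⟨y, hy⟩ := Fintype.exists_ne_of_one_lt_card (by have := T.card_ge; omega) x
    obtain ⟨p⟩ := hconn.preconnected x y
    cases p with
    | nil => exact absurd rfl (Ne.symm hy)
    | cons h q => exact ⟨_, h⟩
  set d : S → ℝ := fun x => (T.deg x : ℝ) with hddef
  have hd1 : ∀ x, (1:ℝ) ≤ d x := by
    intro x
    simp only [hddef, hdegdef]
    push_cast
    have : (1:ℝ) ≤ (T.g.degree x : ℝ) := by exact_mod_cast hdegpos x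
    split <;> linarith
  have hd0 : ∀ x, d x ≠ 0 := fun x => by linarith [hd1 x]
  -- key pointwise identity
  have key : ∀ x, (∑ y, if T.g.Adj x y then v y else 0) + (if x = T.root then v T.root else 0)
      = lam * (d x * v x) := by
    intro x
    have h0 := congrFun heig x
    simp only [Matrix.mulVec, dotProduct, Pi.smul_apply, smul_eq_mul] at h0
    have hPsum : ∑ y, T.transMatrix x y * v y
        = (d x)⁻¹ * ((∑ y, if T.g.Adj x y then v y else 0)
          + (if x = T.root then v T.root else 0)) := by
      have hterm : ∀ y, T.transMatrix x y * v y
          = (d x)⁻¹ * ((if T.g.Adj x y then v y else 0)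
            + (if x = y ∧ x = T.root then v y else 0)) := by
        intro y
        by_cases hadj : T.g.Adj x y
        · have hne : ¬(x = y ∧ x = T.root) := fun h => T.g.ne_of_adj hadj h.1
          simp [TreeWithLoop.transMatrix, hadj, hne, hddef]
        · by_cases hxy : x = y ∧ x = T.root
          · obtain ⟨h1, h2⟩ := hxy
            subst h1; subst h2
            simp [TreeWithLoop.transMatrix, hadj, hddef]
          · simp [TreeWithLoop.transMatrix, hadj, hxy]
      rw [Finset.sum_congr rfl (fun y _ => hterm y), ← Finset.mul_sum, Finset.sum_add_distrib]
      congr 1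
      congr 1
      by_cases hxr : x = T.root
      · subst hxr
        simp
      · simp [hxr]
    rw [hPsum] at h0
    have h2 := congrArg (fun t => d x * t) h0
    rw [← mul_assoc, mul_inv_cancel₀ (hd0 x), one_mul] at h2
    rw [h2]; ring
  -- degree as an if-sum
  have hdegsum : ∀ x, ∑ y, (if T.g.Adj x y then (1:ℝ) else 0) = (T.g.degree x : ℝ) := by
    intro x
    rw [Finset.sum_boole, ← SimpleGraph.neighborFinset_eq_filter,
      SimpleGraph.card_neighborFinset_eq_degree]
  set N : ℝ := ∑ x, d x * v x ^ 2 with hNdef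
  set M : ℝ := ∑ x, d x * v x with hMdef
  set B : ℝ := ∑ x, ∑ y, (if T.g.Adj x y then v x * v y else 0) with hBdef
  have hNsplit : N = (∑ x, (T.g.degree x : ℝ) * v x ^ 2) + v T.root ^ 2 := by
    have h1 : ∀ x, d x * v x ^ 2
        = (T.g.degree x : ℝ) * v x ^ 2 + (if x = T.root then v T.root ^ 2 else 0) := by
      intro x
      rcases eq_or_ne x T.root with rfl | hx
      · simp only [hddef, hdegdef, if_pos rfl]
        push_cast
        ring
      · simp only [hddef, hdegdef, if_neg hx]
        push_cast
        ring
    rw [hNdef, Finset.sum_congr rfl (fun x _ => h1 x), Finset.sum_add_distrib,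
      Finset.sum_ite_eq' Finset.univ T.root (fun _ => v T.root ^ 2)]
    rw [if_pos (Finset.mem_univ _)]
  have hMsplit : M = (∑ x, (T.g.degree x : ℝ) * v x) + v T.root := by
    have h1 : ∀ x, d x * v x
        = (T.g.degree x : ℝ) * v x + (if x = T.root then v T.root else 0) := by
      intro x
      rcases eq_or_ne x T.root with rfl | hx
      · simp only [hddef, hdegdef, if_pos rfl]
        push_cast
        ring
      · simp only [hddef, hdegdef, if_neg hx]
        push_cast
        ring
    rw [hMdef, Finset.sum_congr rfl (fun x _ => h1 x), Finset.sum_add_distrib,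
      Finset.sum_ite_eq' Finset.univ T.root (fun _ => v T.root)]
    rw [if_pos (Finset.mem_univ _)]
  have hswap : ∑ x, ∑ y, (if T.g.Adj x y then v y else 0) = ∑ y, (T.g.degree y : ℝ) * v y := by
    rw [Finset.sum_comm]
    refine Finset.sum_congr rfl fun y _ => ?_
    have h1 : ∀ x, (if T.g.Adj x y then v y else 0) = (if T.g.Adj y x then (1:ℝ) else 0) * v y := by
      intro x
      by_cases h : T.g.Adj x y
      · simp [h, h.symm]
      · have h' : ¬ T.g.Adj y x := fun hh => h hh.symm
        simp [h, h']
    rw [Finset.sum_congr rfl (fun x _ => h1 x), ← Finset.sum_mul, hdegsum]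
  have hM0 : M = 0 := by
    have h1 : ∑ x, ((∑ y, if T.g.Adj x y then v y else 0)
        + (if x = T.root then v T.root else 0)) = ∑ x, lam * (d x * v x) :=
      Finset.sum_congr rfl fun x _ => key x
    rw [Finset.sum_add_distrib, hswap,
      Finset.sum_ite_eq' Finset.univ T.root (fun _ => v T.root), ← Finset.mul_sum] at h1
    simp only [Finset.mem_univ, if_pos] at h1
    have h2 : M = lam * M := by
      nth_rewrite 1 [hMsplit]
      rw [h1, ← hMdef]
    have h3 : (1 - lam) * M = 0 := by linarith [h2]
    have h4 : (1 : ℝ) - lam ≠ 0 := sub_ne_zero.mpr (Ne.symm hlam)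
    exact (mul_eq_zero.1 h3).resolve_left h4
  have hB : B + v T.root ^ 2 = lam * N := by
    have h1 : ∑ x, v x * ((∑ y, if T.g.Adj x y then v y else 0)
        + (if x = T.root then v T.root else 0)) = ∑ x, v x * (lam * (d x * v x)) :=
      Finset.sum_congr rfl fun x _ => by rw [key x]
    have h2 : ∀ x, v x * ((∑ y, if T.g.Adj x y then v y else 0)
        + (if x = T.root then v T.root else 0))
        = (∑ y, if T.g.Adj x y then v x * v y else 0)
          + (if x = T.root then v T.root * v T.root else 0) := by
      intro x
      rw [mul_add, Finset.mul_sum]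
      congr 1
      · exact Finset.sum_congr rfl fun y _ => by split <;> simp
      · rcases eq_or_ne x T.root with rfl | hx
        · simp
        · simp [hx]
    rw [Finset.sum_congr rfl (fun x _ => h2 x), Finset.sum_add_distrib,
      Finset.sum_ite_eq' Finset.univ T.root (fun _ => v T.root * v T.root)] at h1
    simp only [Finset.mem_univ, if_pos] at h1
    have h3 : ∑ x, v x * (lam * (d x * v x)) = lam * N := by
      rw [hNdef, Finset.mul_sum]
      exact Finset.sum_congr rfl fun x _ => by ring
    rw [h3] at h1
    rw [← h1, hBdef]
    ring
  have hE4 : ∑ x, ∑ y, (if T.g.Adj x y then v x ^ 2 else 0) = N - v T.root ^ 2 := by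
    have h1 : ∀ x, ∑ y, (if T.g.Adj x y then v x ^ 2 else 0) = (T.g.degree x : ℝ) * v x ^ 2 := by
      intro x
      have h2 : ∀ y, (if T.g.Adj x y then v x ^ 2 else 0)
          = (if T.g.Adj x y then (1:ℝ) else 0) * v x ^ 2 := fun y => by split <;> simp
      rw [Finset.sum_congr rfl (fun y _ => h2 y), ← Finset.sum_mul, hdegsum]
    rw [Finset.sum_congr rfl (fun x _ => h1 x)]
    rw [hNsplit]
    ring
  have hE4' : ∑ x, ∑ y, (if T.g.Adj x y then v y ^ 2 else 0) = N - v T.root ^ 2 := by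
    rw [Finset.sum_comm]
    have h1 : ∀ y, ∑ x, (if T.g.Adj x y then v y ^ 2 else 0) = (T.g.degree y : ℝ) * v y ^ 2 := by
      intro y
      have h2 : ∀ x, (if T.g.Adj x y then v y ^ 2 else 0)
          = (if T.g.Adj y x then (1:ℝ) else 0) * v y ^ 2 := by
        intro x
        by_cases h : T.g.Adj x y
        · simp [h, h.symm]
        · have h' : ¬ T.g.Adj y x := fun hh => h hh.symm
          simp [h, h']
      rw [Finset.sum_congr rfl (fun x _ => h2 x), ← Finset.sum_mul, hdegsum]
    rw [Finset.sum_congr rfl (fun y _ => h1 y)]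
    rw [hNsplit]
    ring
  set Fm : ℝ := ∑ e ∈ T.g.edgeFinset, TWLProof.fm v e with hFmdef
  set Fp : ℝ := ∑ e ∈ T.g.edgeFinset, TWLProof.fp v e with hFpdef
  have hFm : Fm = (1 - lam) * N := by
    have h1 := TWLProof.double_sum_adj (g := T.g) (TWLProof.fm v)
    simp only [TWLProof.fm_mk] at h1
    have h2 : ∀ (x y : S), (if T.g.Adj x y then (v x - v y) ^ 2 else 0)
        = (if T.g.Adj x y then v x ^ 2 else 0) + (if T.g.Adj x y then v y ^ 2 else 0)
          - 2 * (if T.g.Adj x y then v x * v y else 0) := by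
      intro x y
      split <;> ring
    simp only [h2, Finset.sum_add_distrib, Finset.sum_sub_distrib, ← Finset.mul_sum] at h1
    rw [hE4, hE4'] at h1
    rw [← hBdef] at h1
    have hBval : B = lam * N - v T.root ^ 2 := by linarith [hB]
    rw [hBval] at h1
    rw [← hFmdef] at h1
    linarith [h1]
  have hFp : Fp + 2 * v T.root ^ 2 = (1 + lam) * N := by
    have h1 := TWLProof.double_sum_adj (g := T.g) (TWLProof.fp v)
    simp only [TWLProof.fp_mk] at h1
    have h2 : ∀ (x y : S), (if T.g.Adj x y then (v x + v y) ^ 2 else 0)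
        = (if T.g.Adj x y then v x ^ 2 else 0) + (if T.g.Adj x y then v y ^ 2 else 0)
          + 2 * (if T.g.Adj x y then v x * v y else 0) := by
      intro x y
      split <;> ring
    simp only [h2, Finset.sum_add_distrib, ← Finset.mul_sum] at h1
    rw [hE4, hE4'] at h1
    rw [← hBdef] at h1
    have hBval : B = lam * N - v T.root ^ 2 := by linarith [hB]
    rw [hBval] at h1
    rw [← hFpdef] at h1
    linarith [h1]
  -- positivity of N
  have hNpos : 0 < N := by
    obtain ⟨x0, hx0⟩ := Function.ne_iff.1 hv
    rw [hNdef]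
    apply Finset.sum_pos' (fun x _ => mul_nonneg (by linarith [hd1 x]) (sq_nonneg _))
    exact ⟨x0, Finset.mem_univ x0, mul_pos (by linarith [hd1 x0])
      (pow_two_pos_of_ne_zero hx0)⟩
  -- total degree
  set Z : ℝ := ∑ x, d x with hZdef
  have hcard : (2:ℝ) ≤ (Fintype.card S : ℝ) := by exact_mod_cast T.card_ge
  have hZ : Z = 2 * (Fintype.card S : ℝ) - 1 := by
    have h1 : ∀ x, d x = (T.g.degree x : ℝ) + (if x = T.root then 1 else 0) := by
      intro x
      simp only [hddef, hdegdef]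
      push_cast
      split <;> norm_num
    have h2 : ∑ x, T.g.degree x = 2 * T.g.edgeFinset.card :=
      SimpleGraph.sum_degrees_eq_twice_card_edges T.g
    have h3 : T.g.edgeFinset.card + 1 = Fintype.card S := T.isTree.card_edgeFinset
    rw [hZdef, Finset.sum_congr rfl (fun x _ => h1 x), Finset.sum_add_distrib,
      Finset.sum_ite_eq' Finset.univ T.root (fun _ => (1:ℝ)), if_pos (Finset.mem_univ _)]
    have h4 : (∑ x, ((T.g.degree x : ℕ) : ℝ)) = ((∑ x, T.g.degree x : ℕ) : ℝ) := by
      push_cast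
      rfl
    rw [h4, h2]
    have h5 : ((T.g.edgeFinset.card : ℕ) : ℝ) = (Fintype.card S : ℝ) - 1 := by
      have := h3
      push_cast [← this]
      ring
    push_cast
    rw [h5]
    ring
  have hZpos : 0 < Z := by rw [hZ]; linarith
  -- diameter facts
  have hdistle : ∀ x y, T.g.dist x y ≤ T.diam := fun x y =>
    Finset.le_sup (f := fun p : S × S => T.g.dist p.1 p.2) (Finset.mem_univ (x, y))
  have hD1 : (1:ℝ) ≤ (T.diam : ℝ) := by
    have hx : Nonempty S := Fintype.card_pos_iff.1 (by have := T.card_ge; omega)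
    obtain ⟨x⟩ := hx
    obtain ⟨y, hy⟩ := Fintype.exists_ne_of_one_lt_card (by have := T.card_ge; omega) x
    have h1 : 0 < T.g.dist y x := hconn.pos_dist_of_ne hy
    have h2 : 1 ≤ T.diam := le_trans h1 (hdistle y x)
    exact_mod_cast h2
  have hDnonneg : (0:ℝ) ≤ (T.diam : ℝ) := by linarith
  have hFmnonneg : (0:ℝ) ≤ Fm :=
    Finset.sum_nonneg fun e _ => TWLProof.fm_nonneg v e
  have hFpnonneg : (0:ℝ) ≤ Fp :=
    Finset.sum_nonneg fun e _ => TWLProof.fp_nonneg v e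
  -- upper bound for differences
  have hub : ∀ x y, (v x - v y)^2 ≤ (T.diam : ℝ) * Fm := by
    intro x y
    obtain ⟨p, hp, hlen⟩ := hconn.exists_path_of_dist x y
    have h1 := TWLProof.walk_bound_sub v p
    have h2 : (p.edges.map (TWLProof.fm v)).sum ≤ Fm :=
      TWLProof.path_sum_le (TWLProof.fm_nonneg v) p hp
    have h3 : (p.length : ℝ) ≤ (T.diam : ℝ) := by
      have := hdistle x y
      rw [hlen]
      exact_mod_cast this
    have h4 : (0:ℝ) ≤ (p.edges.map (TWLProof.fm v)).sum :=
      TWLProof.list_sum_nonneg (TWLProof.fm_nonneg v) _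
    calc (v x - v y)^2 ≤ (p.length : ℝ) * (p.edges.map (TWLProof.fm v)).sum := h1
      _ ≤ (T.diam : ℝ) * Fm := mul_le_mul h3 h2 h4 hDnonneg
  -- variance expansion
  have hexpand : ∑ x, ∑ y, d x * d y * (v x - v y)^2 = 2 * Z * N := by
    have e1 : ∀ x, ∑ y, d x * d y * (v x - v y)^2
        = d x * v x ^ 2 * Z + d x * N - 2 * (d x * v x * M) := by
      intro x
      have e2 : ∀ y, d x * d y * (v x - v y)^2
          = d x * v x ^ 2 * d y + d x * (d y * v y ^ 2) - 2 * (d x * v x * (d y * v y)) := by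
        intro y
        ring
      rw [Finset.sum_congr rfl (fun y _ => e2 y), Finset.sum_sub_distrib,
        Finset.sum_add_distrib, ← Finset.mul_sum, ← Finset.mul_sum, ← Finset.mul_sum,
        ← Finset.mul_sum]
      try rw [← hZdef]
      try rw [← hNdef]
      try rw [← hMdef]
    rw [Finset.sum_congr rfl (fun x _ => e1 x), Finset.sum_sub_distrib,
      Finset.sum_add_distrib, ← Finset.sum_mul, ← Finset.sum_mul, ← Finset.mul_sum,
      ← Finset.sum_mul]
    try rw [← hNdef]
    try rw [← hZdef]
    try rw [← hMdef]
    rw [hM0]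
    ring
  have hvarbound : ∑ x, ∑ y, d x * d y * (v x - v y)^2
      ≤ Z * Z * ((T.diam : ℝ) * Fm) := by
    have h1 : ∑ x, ∑ y, d x * d y * (v x - v y)^2
        ≤ ∑ x, ∑ y, d x * d y * ((T.diam : ℝ) * Fm) := by
      apply Finset.sum_le_sum
      intro x _
      apply Finset.sum_le_sum
      intro y _
      exact mul_le_mul_of_nonneg_left (hub x y)
        (mul_nonneg (by linarith [hd1 x]) (by linarith [hd1 y]))
    have h2 : ∑ x, ∑ y, d x * d y * ((T.diam : ℝ) * Fm)
        = Z * Z * ((T.diam : ℝ) * Fm) := by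
      have e1 : ∀ x, ∑ y, d x * d y * ((T.diam : ℝ) * Fm)
          = d x * (Z * ((T.diam : ℝ) * Fm)) := by
        intro x
        have e2 : ∀ y, d x * d y * ((T.diam : ℝ) * Fm)
            = d x * ((T.diam : ℝ) * Fm) * d y := fun y => by ring
        rw [Finset.sum_congr rfl (fun y _ => e2 y), ← Finset.mul_sum, ← hZdef]
        ring
      rw [Finset.sum_congr rfl (fun x _ => e1 x), ← Finset.sum_mul, ← hZdef]
      ring
    linarith
  -- gap on the (1 - lam) side
  have hgap1 : 2 ≤ Z * (T.diam : ℝ) * (1 - lam) := by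
    have h1 : 2 * Z * N ≤ Z * Z * ((T.diam : ℝ) * ((1 - lam) * N)) := by
      rw [← hFm]
      rw [← hexpand]
      exact hvarbound
    have h2 : 2 * (Z * N) ≤ (Z * (T.diam : ℝ) * (1 - lam)) * (Z * N) := by
      calc 2 * (Z * N) = 2 * Z * N := by ring
        _ ≤ Z * Z * ((T.diam : ℝ) * ((1 - lam) * N)) := h1
        _ = (Z * (T.diam : ℝ) * (1 - lam)) * (Z * N) := by ring
    exact TWL_gap_arith1 (mul_pos hZpos hNpos) h2
  -- lower bound side
  have hlb : ∀ x, (v x)^2 ≤ ((T.diam : ℝ) + 1/2) * (Fp + 2 * v T.root ^ 2) := by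
    intro x
    obtain ⟨p, hp, hlen⟩ := hconn.exists_path_of_dist x T.root
    have h1 := TWLProof.walk_bound_add v p
    have h2 : (p.edges.map (TWLProof.fp v)).sum ≤ Fp :=
      TWLProof.path_sum_le (TWLProof.fp_nonneg v) p hp
    have h3 : (p.length : ℝ) ≤ (T.diam : ℝ) := by
      have := hdistle x T.root
      rw [hlen]
      exact_mod_cast this
    have h4 : (0:ℝ) ≤ (p.edges.map (TWLProof.fp v)).sum :=
      TWLProof.list_sum_nonneg (TWLProof.fp_nonneg v) _
    calc (v x)^2 ≤ ((p.length : ℝ) + 1/2) * ((p.edges.map (TWLProof.fp v)).sum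
          + 2 * v T.root ^ 2) := h1
      _ ≤ ((T.diam : ℝ) + 1/2) * (Fp + 2 * v T.root ^ 2) := by
          apply mul_le_mul (by linarith) (by linarith [sq_nonneg (v T.root)])
            (by positivity) (by linarith)
  have hgap2 : 1 ≤ Z * ((T.diam : ℝ) + 1/2) * (1 + lam) := by
    have h1 : N ≤ Z * (((T.diam : ℝ) + 1/2) * ((1 + lam) * N)) := by
      rw [← hFp]
      calc N = ∑ x, d x * v x ^ 2 := hNdef
        _ ≤ ∑ x, d x * (((T.diam : ℝ) + 1/2) * (Fp + 2 * v T.root ^ 2)) := by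
            apply Finset.sum_le_sum
            intro x _
            exact mul_le_mul_of_nonneg_left (hlb x) (by linarith [hd1 x])
        _ = Z * (((T.diam : ℝ) + 1/2) * (Fp + 2 * v T.root ^ 2)) := by
            rw [← Finset.sum_mul, ← hZdef]
    have h2 : N ≤ (Z * ((T.diam : ℝ) + 1/2) * (1 + lam)) * N := by
      calc N ≤ Z * (((T.diam : ℝ) + 1/2) * ((1 + lam) * N)) := h1
        _ = (Z * ((T.diam : ℝ) + 1/2) * (1 + lam)) * N := by ring
    exact TWL_gap_arith2 hNpos h2
  exact TWL_final_arith lam (Fintype.card S : ℝ) (T.diam : ℝ) Z hcard hD1 hZ hgap1 hgap2
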